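/- Let R be a Noetherian domain with fraction field K and let I ⊆ R be an ideal of height ≥ 2. Then, inside K: (1) the local hull Γ(Spec R ∖ V(I), O) = colim_n Hom_R(I^n, R) is contained in the hull ⋂_p R_p (intersection over all height-1 primes p of R); and (2) equality colim_n Hom_R(I^n, R) = ⋂_p R_p holds if and only if for every prime q ⊆ R with I ⊄ q one has depth_{R_q} R_q ≥ min(2, ht q), i.e., R is S2 away from V(I). -/

import Mathlib

universe u

/-- `depthGE R J M n` : there is a weakly regular sequence on `M` of length `n` with entries
in `J`.  For a Noetherian local ring `R` and a finite module `M` with `J • M ≠ M` this says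
exactly `depth_J M ≥ n` (and the zero module has depth `+∞`, so `depthGE` always holds
for it, matching the usual convention). -/
def depthGE (R : Type u) [CommRing R] (J : Ideal R)
    (M : Type u) [AddCommGroup M] [Module R M] (n : ℕ) : Prop :=
  ∃ rs : List R, rs.length = n ∧ (∀ r ∈ rs, r ∈ J) ∧
    RingTheory.Sequence.IsWeaklyRegular M rs

/-- The (Krull) dimension of a module: `dim (R / ann M)`. -/
noncomputable def moduleKrullDim (R : Type u) [CommRing R]
    (M : Type u) [AddCommGroup M] [Module R M] : WithBot ℕ∞ :=
  ringKrullDim (R ⧸ Module.annihilator R M)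

/-- Serre's condition `S2` for a finite module over a Noetherian ring:
`depth_{R_p} M_p ≥ min (2, dim M_p)` for every prime `p` in the support of `M`. -/
def IsS2 (R : Type u) [CommRing R] (M : Type u) [AddCommGroup M] [Module R M] : Prop :=
  ∀ p ∈ Module.support R M, ∀ n : ℕ,
    (n : WithBot ℕ∞) ≤ min 2 (moduleKrullDim (Localization.AtPrime p.asIdeal)
        (LocalizedModule p.asIdeal.primeCompl M)) →
      depthGE (Localization.AtPrime p.asIdeal)
        (IsLocalRing.maximalIdeal (Localization.AtPrime p.asIdeal))
        (LocalizedModule p.asIdeal.primeCompl M) n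
/-- The hull of a Noetherian domain `R`: the intersection `⋂_p R_p ⊆ K` over all height-1
primes `p` of `R`, inside the fraction field `K` (equal to `K` if there are no height-1
primes). -/
noncomputable def domainHull (R : Type u) [CommRing R] [IsDomain R] :
    Submodule R (FractionRing R) :=
  ⨅ (p : PrimeSpectrum R) (_ : Order.height p = 1),
    Subalgebra.toSubmodule (Localization.subalgebra (FractionRing R) p.asIdeal.primeCompl
      p.asIdeal.primeCompl_le_nonZeroDivisors)

/-- The local hull of a Noetherian domain `R` centered at `V(I)`, realized inside the
fraction field `K`: the union over `n` of `{x ∈ K | Iⁿ • x ⊆ R}`; it is canonically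
isomorphic to `colim_n Hom_R(Iⁿ, R) = Γ(Spec R ∖ V(I), O)`. -/
noncomputable def localHullInFrac (R : Type u) [CommRing R] [IsDomain R] (I : Ideal R) :
    Submodule R (FractionRing R) :=
  ⨆ n : ℕ, ((1 : Submodule R (FractionRing R)) /
    Submodule.map (Algebra.linearMap R (FractionRing R)) (I ^ n : Ideal R))

/- ### Auxiliary material -/

open scoped Pointwise

set_option linter.unusedSectionVars false in
/-- The colon ideal `(R :_R x)` of an element of the fraction field. -/
noncomputable def colonOf (R : Type u) [CommRing R] [IsDomain R] (x : FractionRing R) : Ideal R :=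
  Submodule.comap (LinearMap.toSpanSingleton R (FractionRing R) x)
    (1 : Submodule R (FractionRing R))

set_option linter.unusedSectionVars false in
lemma mem_colonOf (R : Type u) [CommRing R] [IsDomain R] {x : FractionRing R} {a : R} :
    a ∈ colonOf R x ↔ ∃ b : R, algebraMap R (FractionRing R) b = a • x := by
  simp [colonOf, Submodule.mem_comap, LinearMap.toSpanSingleton_apply, Submodule.mem_one]

lemma mem_localHull (R : Type u) [CommRing R] [IsDomain R] {I : Ideal R} {x : FractionRing R} :
    x ∈ localHullInFrac R I ↔ ∃ n : ℕ, I ^ n ≤ colonOf R x := by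
  have hdir : Monotone (fun n : ℕ => ((1 : Submodule R (FractionRing R)) /
      Submodule.map (Algebra.linearMap R (FractionRing R)) (I ^ n : Ideal R))) := by
    intro n m hnm z hz
    rw [Submodule.mem_div_iff_forall_mul_mem] at hz ⊢
    intro y hy
    obtain ⟨a, ha, rfl⟩ := Submodule.mem_map.mp hy
    exact hz _ (Submodule.mem_map.mpr ⟨a, Ideal.pow_le_pow_right hnm ha, rfl⟩)
  have hmem : ∀ (n : ℕ) (x : FractionRing R), (x ∈ (1 : Submodule R (FractionRing R)) /
      Submodule.map (Algebra.linearMap R (FractionRing R)) (I ^ n : Ideal R)) ↔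
      I ^ n ≤ colonOf R x := by
    intro n x
    rw [Submodule.mem_div_iff_forall_mul_mem]
    constructor
    · intro h a ha
      rw [mem_colonOf]
      have := h _ (Submodule.mem_map.mpr ⟨a, ha, rfl⟩)
      rw [Submodule.mem_one] at this
      obtain ⟨b, hb⟩ := this
      exact ⟨b, by rw [hb, Algebra.smul_def, mul_comm]; rfl⟩
    · intro h y hy
      obtain ⟨a, ha, rfl⟩ := Submodule.mem_map.mp hy
      obtain ⟨b, hb⟩ := (mem_colonOf R).mp (h ha)
      rw [Submodule.mem_one]
      exact ⟨b, by rw [hb, Algebra.smul_def, mul_comm]; rfl⟩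
  rw [localHullInFrac, Submodule.mem_iSup_of_directed _ hdir.directed_le]
  exact exists_congr fun n => hmem n x

lemma mem_domainHull (R : Type u) [CommRing R] [IsDomain R] {x : FractionRing R} :
    x ∈ domainHull R ↔
      ∀ p : PrimeSpectrum R, Order.height p = 1 → ¬ colonOf R x ≤ p.asIdeal := by
  rw [domainHull, Submodule.mem_iInf]
  refine forall_congr' fun p => ?_
  rw [Submodule.mem_iInf]
  constructor
  · intro h hp hle
    have hx := h hp
    rw [Subalgebra.mem_toSubmodule] at hx
    rw [Localization.subalgebra, Subalgebra.copy_eq,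
      Localization.mem_range_mapToFractionRing_iff] at hx
    obtain ⟨a, s, hs, rfl⟩ := hx
    have : s ∈ colonOf R (IsLocalization.mk' (FractionRing R) a
        ⟨s, p.asIdeal.primeCompl_le_nonZeroDivisors hs⟩) := by
      rw [mem_colonOf]
      refine ⟨a, ?_⟩
      rw [Algebra.smul_def, mul_comm]
      exact (IsLocalization.mk'_spec (FractionRing R) a
        ⟨s, p.asIdeal.primeCompl_le_nonZeroDivisors hs⟩).symm
    exact hs (hle this)
  · intro h hp
    rw [Subalgebra.mem_toSubmodule, Localization.subalgebra, Subalgebra.copy_eq,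
      Localization.mem_range_mapToFractionRing_iff]
    obtain ⟨s, hs, hsp⟩ := SetLike.not_le_iff_exists.mp (h hp)
    obtain ⟨b, hb⟩ := (mem_colonOf R).mp hs
    refine ⟨b, s, hsp, ?_⟩
    rw [IsLocalization.eq_mk'_iff_mul_eq]
    rw [Algebra.smul_def, mul_comm] at hb
    exact hb.symm

lemma exists_ne_zero_mem_colonOf (R : Type u) [CommRing R] [IsDomain R] (x : FractionRing R) :
    ∃ b : R, b ≠ 0 ∧ b ∈ colonOf R x := by
  obtain ⟨⟨a, b⟩, hab⟩ := IsLocalization.mk'_surjective (nonZeroDivisors R) x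
  dsimp only at hab
  refine ⟨b, nonZeroDivisors.ne_zero b.2, ?_⟩
  rw [mem_colonOf]
  refine ⟨a, ?_⟩
  rw [Algebra.smul_def, ← hab, mul_comm]
  exact (IsLocalization.mk'_spec (FractionRing R) a b).symm

lemma smul_top_singleton {B : Type u} [CommRing B] (r : B) :
    r • (⊤ : Submodule B B) = Ideal.span {r} := by
  rw [← Submodule.ideal_span_singleton_smul, smul_eq_mul, Ideal.mul_top]

/-- Powers of a (weakly) regular pair remain regular: element-level form. -/
lemma pow_regular_mod_pow {B : Type u} [CommRing B] {r s : B}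
    (hr : ∀ a b : B, r * a = r * b → a = b)
    (hs : ∀ a b : B, s * a = r * b → ∃ c : B, a = r * c) (N : ℕ) :
    ∀ a b : B, s ^ N * a = r ^ N * b → ∃ c : B, a = r ^ N * c := by
  have hrn : ∀ (n : ℕ) (a b : B), r ^ n * a = r ^ n * b → a = b := by
    intro n
    induction n with
    | zero => intro a b h; simpa using h
    | succ n ih =>
      intro a b h
      rw [pow_succ] at h
      apply ih
      apply hr
      ring_nf at h ⊢
      linear_combination h
  have Q : ∀ (n : ℕ) (a b : B), s * a = r ^ n * b → ∃ c : B, a = r ^ n * c := by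
    intro n
    induction n with
    | zero => intro a b h; exact ⟨a, by simp⟩
    | succ n ih =>
      intro a b h
      obtain ⟨c, hc⟩ := ih a (r * b) (by rw [h]; ring)
      have h2 : s * c = r * b := by
        apply hrn n
        rw [← mul_assoc, mul_comm (r ^ n) s, mul_assoc, ← hc, h]
        ring
      obtain ⟨d, hd⟩ := hs c b h2
      exact ⟨d, by rw [hc, hd]; ring⟩
  have P : ∀ (m : ℕ) (a b : B), s ^ m * a = r ^ N * b → ∃ c : B, a = r ^ N * c := by
    intro m
    induction m with
    | zero => intro a b h; exact ⟨b, by simpa using h⟩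
    | succ m ih =>
      intro a b h
      obtain ⟨c, hc⟩ := Q N (s ^ m * a) b (by rw [← h]; ring)
      obtain ⟨d, hd⟩ := ih a c hc
      exact ⟨d, hd⟩
  exact P N

lemma two_le_enat {h : ℕ∞} (h0 : h ≠ 0) (h1 : h ≠ 1) : 2 ≤ h := by
  cases h with
  | top => exact le_top
  | coe n =>
    have h0' : n ≠ 0 := by exact_mod_cast h0
    have h1' : n ≠ 1 := by exact_mod_cast h1
    exact_mod_cast (by omega : 2 ≤ n)

/-- Core of the "S2 implies equality" direction: if `q` is a minimal prime over the colon
ideal of `x` and the local ring at `q` admits a weakly regular pair inside its maximal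
ideal, we get a contradiction. -/
lemma local_step (R : Type u) [CommRing R] [IsDomain R] [IsNoetherianRing R]
    (x : FractionRing R) (q : PrimeSpectrum R)
    (hqmin : q.asIdeal ∈ (colonOf R x).minimalPrimes)
    (hreg : ∃ r s : Localization.AtPrime q.asIdeal,
      r ∈ IsLocalRing.maximalIdeal (Localization.AtPrime q.asIdeal) ∧
      s ∈ IsLocalRing.maximalIdeal (Localization.AtPrime q.asIdeal) ∧
      RingTheory.Sequence.IsWeaklyRegular (Localization.AtPrime q.asIdeal) [r, s]) :
    False := by
  classical
  set Rq := Localization.AtPrime q.asIdeal with hRq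
  let φ := algebraMap R (FractionRing R)
  let φq := algebraMap R Rq
  haveI : IsDomain Rq :=
    IsLocalization.isDomain_localization q.asIdeal.primeCompl_le_nonZeroDivisors
  haveI : IsNoetherianRing Rq :=
    IsLocalization.isNoetherianRing q.asIdeal.primeCompl Rq ‹IsNoetherianRing R›
  have hu : ∀ y : q.asIdeal.primeCompl, IsUnit (φ y) := by
    rintro ⟨y, hy⟩
    have hy0 : y ≠ 0 := fun h => hy (h ▸ q.asIdeal.zero_mem)
    exact isUnit_iff_ne_zero.mpr
      (fun h => hy0 ((IsFractionRing.to_map_eq_zero_iff (K := FractionRing R)).mp h))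
  let ψ : Rq →+* FractionRing R := IsLocalization.lift hu
  have hψφ : ∀ a : R, ψ (φq a) = φ a := fun a => IsLocalization.lift_eq hu a
  have hψinj : Function.Injective ψ := by
    rw [injective_iff_map_eq_zero]
    intro z hz
    obtain ⟨⟨a, t⟩, hz'⟩ := IsLocalization.mk'_surjective q.asIdeal.primeCompl z
    dsimp only at hz'
    subst hz'
    have := (IsLocalization.lift_mk'_spec (S := Rq) (g := φ) hu a 0 t).mp hz
    rw [mul_zero] at this
    have ha : a = 0 := IsFractionRing.to_map_eq_zero_iff.mp this
    rw [ha, IsLocalization.mk'_zero]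
  set J : Ideal R := colonOf R x with hJ
  have hJq : J ≤ q.asIdeal := hqmin.1.2
  set Jq : Ideal Rq := J.map φq with hJqdef
  set m : Ideal Rq := IsLocalRing.maximalIdeal Rq with hm
  have hmrad : m ≤ Jq.radical := by
    rw [Ideal.radical_eq_sInf]
    refine le_sInf ?_
    rintro P ⟨hJqP, hP⟩
    have hcom : J ≤ P.comap φq := fun a haJ =>
      Ideal.mem_comap.mpr (hJqP (Ideal.mem_map_of_mem φq haJ))
    have hPm : P ≤ m := IsLocalRing.le_maximalIdeal hP.ne_top
    have hcq : P.comap φq ≤ q.asIdeal := by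
      have h2 := Ideal.comap_mono (f := φq) hPm
      rw [hm] at h2
      exact h2.trans (Localization.AtPrime.under_maximalIdeal (I := q.asIdeal)).le
    have hqc : q.asIdeal ≤ P.comap φq :=
      hqmin.2 ⟨by haveI := hP; exact Ideal.IsPrime.comap φq, hcom⟩ hcq
    calc m = q.asIdeal.map φq := (Localization.AtPrime.map_eq_maximalIdeal).symm
    _ ≤ (P.comap φq).map φq := Ideal.map_mono hqc
    _ ≤ P := Ideal.map_comap_le
  obtain ⟨N, hN⟩ : ∃ n : ℕ, m ^ n ≤ Jq :=
    Ideal.exists_pow_le_of_le_radical_of_fg hmrad (IsNoetherian.noetherian m)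
  have key : ∀ w ∈ Jq, ∃ a : Rq, ψ w * x = ψ a := by
    intro w hw
    have hw' : w ∈ Ideal.span (φq '' (J : Set R)) := hw
    clear hw
    induction hw' using Submodule.span_induction with
    | mem w hwmem =>
      obtain ⟨j, hj, rfl⟩ := hwmem
      obtain ⟨b, hb⟩ := (mem_colonOf R).mp hj
      exact ⟨φq b, by rw [hψφ, hψφ, hb, Algebra.smul_def]⟩
    | zero => exact ⟨0, by simp⟩
    | add w w' _ _ ha ha' =>
      obtain ⟨a, ha⟩ := ha; obtain ⟨a', ha'⟩ := ha'
      exact ⟨a + a', by rw [map_add, add_mul, ha, ha', map_add]⟩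
    | smul c w _ ha =>
      obtain ⟨a, ha⟩ := ha
      exact ⟨c * a, by rw [smul_eq_mul, map_mul, map_mul, mul_assoc, ha]⟩
  obtain ⟨r, s, hrm, hsm, hwr⟩ := hreg
  rw [RingTheory.Sequence.isWeaklyRegular_cons_iff] at hwr
  obtain ⟨h1, hwr2⟩ := hwr
  rw [RingTheory.Sequence.isWeaklyRegular_cons_iff] at hwr2
  obtain ⟨h2, -⟩ := hwr2
  have hr : ∀ a b : Rq, r * a = r * b → a = b := by
    intro a b h
    exact h1 (by simpa [smul_eq_mul] using h)
  have hs : ∀ a b : Rq, s * a = r * b → ∃ c : Rq, a = r * c := by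
    intro a b h
    have hz : s • (Submodule.Quotient.mk a : QuotSMulTop r Rq) = s • (0 : QuotSMulTop r Rq) := by
      rw [smul_zero, ← Submodule.Quotient.mk_smul, Submodule.Quotient.mk_eq_zero,
        smul_top_singleton, smul_eq_mul, h, Ideal.mem_span_singleton']
      exact ⟨b, by ring⟩
    have := h2 hz
    rw [Submodule.Quotient.mk_eq_zero, smul_top_singleton, Ideal.mem_span_singleton'] at this
    obtain ⟨c, hc⟩ := this
    exact ⟨c, by rw [← hc]; ring⟩
  have hr0 : r ≠ 0 := by
    intro h
    subst h
    exact one_ne_zero (hr 1 0 (by ring))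
  obtain ⟨a, ha⟩ := key (r ^ N) (hN (Ideal.pow_mem_pow hrm N))
  obtain ⟨b, hb⟩ := key (s ^ N) (hN (Ideal.pow_mem_pow hsm N))
  have hva : s ^ N * a = r ^ N * b := by
    apply hψinj
    rw [map_mul, map_mul, ← ha, ← hb]
    ring
  obtain ⟨c, hc⟩ := pow_regular_mod_pow hr hs N a b hva
  have hψu : ψ (r ^ N) ≠ 0 := by
    intro h
    exact pow_ne_zero N hr0 (hψinj (by rw [h, map_zero]))
  have hx : x = ψ c := by
    have : ψ (r ^ N) * x = ψ (r ^ N) * ψ c := by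
      rw [ha, hc, map_mul]
    exact mul_left_cancel₀ hψu this
  obtain ⟨⟨c₀, t⟩, hct⟩ := IsLocalization.mk'_surjective q.asIdeal.primeCompl c
  dsimp only at hct
  have htx : (t : R) • x = φ c₀ := by
    rw [Algebra.smul_def, hx, ← hct,
      show algebraMap R (FractionRing R) t = ψ (φq t) from (hψφ t).symm,
      ← map_mul, IsLocalization.mk'_spec', hψφ]
  have : (t : R) ∈ J := (mem_colonOf R).mpr ⟨c₀, htx.symm⟩
  exact t.2 (hJq this)

set_option maxHeartbeats 1000000 in
/-- Core of the "equality implies S2" direction. -/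
lemma depth_two_of_eq (R : Type u) [CommRing R] [IsDomain R] [IsNoetherianRing R] (I : Ideal R)
    (hht : ∀ p : PrimeSpectrum R, I ≤ p.asIdeal → 2 ≤ Order.height p)
    (heq : localHullInFrac R I = domainHull R)
    (q : PrimeSpectrum R) (hIq : ¬ I ≤ q.asIdeal) (hq2 : (2 : ℕ∞) ≤ Order.height q) :
    ∃ r s : Localization.AtPrime q.asIdeal,
      r ∈ IsLocalRing.maximalIdeal (Localization.AtPrime q.asIdeal) ∧
      s ∈ IsLocalRing.maximalIdeal (Localization.AtPrime q.asIdeal) ∧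
      RingTheory.Sequence.IsWeaklyRegular (Localization.AtPrime q.asIdeal) [r, s] := by
  classical
  set Rq := Localization.AtPrime q.asIdeal with hRqdef
  let φ := algebraMap R (FractionRing R)
  let φq := algebraMap R Rq
  haveI : IsDomain Rq :=
    IsLocalization.isDomain_localization q.asIdeal.primeCompl_le_nonZeroDivisors
  haveI : IsNoetherianRing Rq :=
    IsLocalization.isNoetherianRing q.asIdeal.primeCompl Rq ‹IsNoetherianRing R›
  have hφqinj : Function.Injective φq :=
    IsLocalization.injective Rq q.asIdeal.primeCompl_le_nonZeroDivisors
  have hφinj : Function.Injective φ := IsFractionRing.injective R (FractionRing R)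
  set m : Ideal Rq := IsLocalRing.maximalIdeal Rq with hmdef
  have hmem_m : ∀ a : R, φq a ∈ m ↔ a ∈ q.asIdeal := fun a =>
    IsLocalization.AtPrime.to_map_mem_maximal_iff Rq q.asIdeal a
  -- q ≠ ⊥
  have hq0 : q.asIdeal ≠ ⊥ := by
    intro h
    have hmin : IsMin q := by
      intro p hp
      rw [← PrimeSpectrum.asIdeal_le_asIdeal, h]
      exact bot_le
    rw [Order.height_eq_zero.mpr hmin] at hq2
    exact (by norm_num : ¬ (2:ℕ∞) ≤ 0) hq2
  obtain ⟨r, hrq, hr0⟩ := Submodule.exists_mem_ne_zero_of_ne_bot hq0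
  set ρ : Rq := φq r with hρdef
  have hρm : ρ ∈ m := (hmem_m r).mpr hrq
  have hρ0 : ρ ≠ 0 := fun h => hr0 (hφqinj (h.trans (map_zero φq).symm))
  have h1 : IsSMulRegular Rq ρ := fun a b h =>
    mul_left_cancel₀ hρ0 (by simpa [smul_eq_mul] using h)
  by_cases hσ : ∃ σ ∈ m, IsSMulRegular (QuotSMulTop ρ Rq) σ
  · obtain ⟨σ, hσm, hσreg⟩ := hσ
    refine ⟨ρ, σ, hρm, hσm, ?_⟩
    exact RingTheory.Sequence.IsWeaklyRegular.cons h1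
      (RingTheory.Sequence.IsWeaklyRegular.cons hσreg (RingTheory.Sequence.IsWeaklyRegular.nil _ _))
  · exfalso
    push_neg at hσ
    set Iρ : Ideal Rq := Ideal.span {ρ} with hIρdef
    obtain ⟨t, htinf, htprim, -, hterase⟩ : ∃ t : Finset (Ideal Rq),
        Submodule.IsMinimalPrimaryDecomposition Iρ t :=
      Submodule.IsLasker.exists_isMinimalPrimaryDecomposition (Submodule.isLasker Rq Rq) Iρ
    have hIρm : Iρ ≤ m := by
      rw [hIρdef, Ideal.span_le, Set.singleton_subset_iff]; exact hρm
    have hmkeq : ∀ b : Rq, (Submodule.Quotient.mk b : QuotSMulTop ρ Rq) = 0 ↔ b ∈ Iρ := by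
      intro b
      rw [Submodule.Quotient.mk_eq_zero, smul_top_singleton]
    -- every element of m is a zero divisor mod ρ
    have hzd : ∀ σ ∈ m, ∃ a : Rq, a ∉ Iρ ∧ σ * a ∈ Iρ := by
      intro σ hσm
      have hnreg := hσ σ hσm
      rw [IsSMulRegular, Function.not_injective_iff] at hnreg
      obtain ⟨z, w, hzw, hne⟩ := hnreg
      obtain ⟨a₀, ha₀⟩ := Submodule.Quotient.mk_surjective _ (z - w)
      refine ⟨a₀, ?_, ?_⟩
      · intro h
        apply hne
        have hz0 : z - w = 0 := by rw [← ha₀]; exact (hmkeq a₀).mpr h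
        exact sub_eq_zero.mp hz0
      · rw [← hmkeq (σ * a₀), show σ * a₀ = σ • a₀ from rfl, Submodule.Quotient.mk_smul, ha₀,
          smul_sub, hzw, sub_self]
    -- m is contained in the union of the radicals of the primary components
    have hsub : (m : Set Rq) ⊆ ⋃ Jp ∈ t, (Jp.radical : Set Rq) := by
      intro σ hσm
      obtain ⟨a, haI, haσ⟩ := hzd σ hσm
      have hnotinf : ¬ a ∈ t.inf id := by rw [htinf]; exact haI
      rw [Submodule.mem_finsetInf] at hnotinf
      push_neg at hnotinf
      obtain ⟨Jp, hJpt, haJp⟩ := hnotinf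
      have hmul : a * σ ∈ Jp := by
        rw [mul_comm]
        exact (htinf ▸ Finset.inf_le hJpt : Iρ ≤ id Jp) haσ
      have := (Ideal.isPrimary_iff.mp (htprim hJpt)).2 hmul
      rcases this with h | h
      · exact absurd h haJp
      · exact Set.mem_biUnion hJpt h
    -- prime avoidance
    have havoid : ∃ Jp ∈ t, m ≤ Jp.radical := by
      have := (Ideal.subset_union_prime (R := Rq) (s := t) (f := Ideal.radical) ⊤ ⊤
        (fun i hi _ _ => Ideal.isPrime_radical (htprim hi))).mp hsub
      exact this
    obtain ⟨Jp, hJpt, hmJp⟩ := havoid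
    have hradm : Jp.radical = m :=
      le_antisymm (IsLocalRing.le_maximalIdeal
        (by rw [Ne, Ideal.radical_eq_top]; exact (Ideal.isPrimary_iff.mp (htprim hJpt)).1)) hmJp
    obtain ⟨N, hNJ⟩ : ∃ n : ℕ, m ^ n ≤ Jp :=
      Ideal.exists_pow_le_of_le_radical_of_fg hmJp (IsNoetherian.noetherian m)
    obtain ⟨y, hy_inf, hy_notJ⟩ := SetLike.not_le_iff_exists.mp (hterase hJpt)
    have hyI : y ∉ Iρ := fun h => hy_notJ ((htinf ▸ Finset.inf_le hJpt : Iρ ≤ id Jp) h)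
    have hann : ∀ aa ∈ m ^ N, aa * y ∈ Iρ := by
      intro aa ha
      rw [← htinf, Submodule.mem_finsetInf]
      intro i hi
      by_cases hiJ : i = Jp
      · subst hiJ
        exact Ideal.mul_mem_right y i (hNJ ha)
      · have hyi : y ∈ i := by
          rw [Submodule.mem_finsetInf] at hy_inf
          exact hy_inf i (Finset.mem_erase.mpr ⟨hiJ, hi⟩)
        exact Ideal.mul_mem_left i aa hyi
    -- the maximal ideal is an associated prime of Rq/ρ
    have hz0 : (Submodule.Quotient.mk y : QuotSMulTop ρ Rq) ≠ 0 := fun h => hyI ((hmkeq y).mp h)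
    obtain ⟨P, hPass, hPge⟩ :=
      exists_le_isAssociatedPrime_of_isNoetherianRing Rq (Submodule.Quotient.mk y) hz0
    have hPm : P = m := by
      refine le_antisymm (IsLocalRing.le_maximalIdeal hPass.1.ne_top) ?_
      have hPN : m ^ N ≤ P := by
        refine le_trans ?_ hPge
        intro aa ha
        rw [Submodule.mem_colon_singleton, Submodule.mem_bot, show aa • (Submodule.Quotient.mk y :
          QuotSMulTop ρ Rq) = Submodule.Quotient.mk (aa • y) from
          (Submodule.Quotient.mk_smul _ _ _).symm, hmkeq]
        exact hann aa ha
      exact hPass.1.le_of_pow_le hPN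
    obtain ⟨-, w, hw⟩ := isAssociatedPrime_iff.mp hPass
    obtain ⟨w₀, rfl⟩ := Submodule.Quotient.mk_surjective _ w
    have hw' : ∀ aa : Rq, aa * w₀ ∈ Iρ ↔ aa ∈ m := by
      intro aa
      rw [← hPm, hw, Submodule.mem_colon_singleton, Submodule.mem_bot,
        show aa • (Submodule.Quotient.mk w₀ : QuotSMulTop ρ Rq) = Submodule.Quotient.mk (aa • w₀)
          from (Submodule.Quotient.mk_smul _ _ _).symm, hmkeq]
      rfl
    obtain ⟨⟨w₁, t₁⟩, hwt⟩ := IsLocalization.mk'_surjective q.asIdeal.primeCompl w₀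
    dsimp only at hwt
    have ht₁u : IsUnit (φq (t₁ : R)) := IsLocalization.map_units Rq t₁
    have hw2 : ∀ aa : Rq, aa * φq w₁ ∈ Iρ ↔ aa ∈ m := by
      intro aa
      have hspec : φq (t₁ : R) * w₀ = φq w₁ := by
        rw [← hwt]; exact IsLocalization.mk'_spec' Rq w₁ t₁
      rw [← hspec, show aa * (φq (t₁ : R) * w₀) = φq (t₁ : R) * (aa * w₀) by ring,
        Ideal.unit_mul_mem_iff_mem _ ht₁u, hw' aa]
    -- descend: find generators data
    obtain ⟨G, hG⟩ := IsNoetherian.noetherian q.asIdeal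
    have hgen : ∀ g ∈ G, ∃ u : R, u ∉ q.asIdeal ∧ u * (g * w₁) ∈ Ideal.span {r} := by
      intro g hg
      have hgq : g ∈ q.asIdeal := by rw [← hG]; exact Ideal.subset_span hg
      have hgm : φq g ∈ m := (hmem_m g).mpr hgq
      have : φq g * φq w₁ ∈ Iρ := (hw2 (φq g)).mpr hgm
      rw [hIρdef, Ideal.mem_span_singleton'] at this
      obtain ⟨cc, hcc⟩ := this
      obtain ⟨⟨c₁, u₁⟩, hcu⟩ := IsLocalization.mk'_surjective q.asIdeal.primeCompl cc
      dsimp only at hcu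
      refine ⟨(u₁ : R), u₁.2, ?_⟩
      rw [Ideal.mem_span_singleton']
      refine ⟨c₁, hφqinj ?_⟩
      rw [map_mul, map_mul, map_mul]
      have hspec : φq (u₁ : R) * cc = φq c₁ := by
        rw [← hcu]; exact IsLocalization.mk'_spec' Rq c₁ u₁
      calc φq c₁ * φq r = (φq (u₁ : R) * cc) * φq r := by rw [hspec]
      _ = φq (u₁ : R) * (cc * ρ) := by rw [hρdef]; ring
      _ = φq (u₁ : R) * (φq g * φq w₁) := by rw [hcc]
      _ = φq (u₁ : R) * (φq g * φq w₁) := rfl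
    choose! uf huf1 huf2 using hgen
    set T : R := ∏ g ∈ G, uf g with hT
    have hTq : T ∉ q.asIdeal := by
      have : T ∈ q.asIdeal.primeCompl := Submonoid.prod_mem _ (fun g hg => huf1 g hg)
      exact this
    have hTgw : ∀ g ∈ G, g * (T * w₁) ∈ Ideal.span {r} := by
      intro g hg
      have h2 := huf2 g hg
      have hTfac : T = uf g * ∏ g' ∈ G.erase g, uf g' := (Finset.mul_prod_erase G uf hg).symm
      have heq2 : g * (T * w₁) = (∏ g' ∈ G.erase g, uf g') * (uf g * (g * w₁)) := by
        rw [hTfac]; ring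
      rw [heq2]
      exact Ideal.mul_mem_left _ _ h2
    set y₁ : R := T * w₁ with hy₁
    have hφr : φ r ≠ 0 := fun h => hr0 (hφinj (h.trans (map_zero φ).symm))
    set x : FractionRing R := φ y₁ * (φ r)⁻¹ with hx
    have hcolon : colonOf R x = q.asIdeal := by
      ext a
      rw [mem_colonOf]
      constructor
      · rintro ⟨b, hb⟩
        have hbr : b * r = a * y₁ := by
          apply hφinj
          rw [map_mul, map_mul]
          have : φ b * φ r = (a • x) * φ r := by rw [hb]
          rw [Algebra.smul_def, hx] at this
          rw [this]
          field_simp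
          exact mul_comm _ _
        have hmem : φq (a * T) * φq w₁ ∈ Iρ := by
          have h3 : φq (a * y₁) ∈ Iρ := by
            rw [← hbr, map_mul, hIρdef, Ideal.mem_span_singleton']
            exact ⟨φq b, rfl⟩
          have h4 : φq (a * T) * φq w₁ = φq (a * y₁) := by
            rw [hy₁, ← map_mul]
            ring_nf
          rw [h4]
          exact h3
        have : φq (a * T) ∈ m := (hw2 _).mp hmem
        have haT : a * T ∈ q.asIdeal := (hmem_m _).mp this
        rcases q.2.mem_or_mem haT with h | h
        · exact h
        · exact absurd h hTq
      · intro haq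
        have hqy : ∀ c ∈ q.asIdeal, c * y₁ ∈ Ideal.span {r} := by
          intro c hc
          rw [← hG] at hc
          induction hc using Submodule.span_induction with
          | mem g hgmem => exact hTgw g hgmem
          | zero => rw [zero_mul]; exact Ideal.zero_mem _
          | add c c' _ _ hc hc' => rw [add_mul]; exact Ideal.add_mem _ hc hc'
          | smul d c _ hc =>
            rw [smul_eq_mul, mul_assoc]
            exact Ideal.mul_mem_left _ d hc
        obtain ⟨d, hd⟩ := Ideal.mem_span_singleton'.mp (hqy a haq)
        refine ⟨d, ?_⟩
        rw [Algebra.smul_def, hx, ← div_eq_mul_inv, ← mul_div_assoc, eq_div_iff hφr,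
          ← map_mul, ← map_mul, hd]
    -- x is in the hull but not the local hull
    have hxhull : x ∈ domainHull R := by
      rw [mem_domainHull]
      intro p hp1 hle
      rw [hcolon] at hle
      have : q ≤ p := (PrimeSpectrum.asIdeal_le_asIdeal q p).mp hle
      have := Order.height_mono this
      rw [hp1] at this
      exact (by norm_num : ¬ (2:ℕ∞) ≤ 1) (le_trans hq2 this)
    rw [← heq, mem_localHull] at hxhull
    obtain ⟨n, hn⟩ := hxhull
    rw [hcolon] at hn
    exact hIq (q.2.le_of_pow_le hn)

/-- Let `R` be a Noetherian domain with fraction field `K` and `I ⊆ R` an ideal of height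
≥ 2.  Then, inside `K`: (1) the local hull `colim_n Hom_R(Iⁿ, R)` is contained in the hull
`⋂_p R_p` (intersection over height-1 primes); (2) equality holds iff for every prime `q`
with `I ⊄ q` one has `depth_{R_q} R_q ≥ min (2, ht q)`, i.e. `R` is `S2` away from `V(I)`. -/
theorem local_hull_le_domain_hull_and_eq_iff
    (R : Type u) [CommRing R] [IsDomain R] [IsNoetherianRing R]
    (I : Ideal R) (hht : ∀ p : PrimeSpectrum R, I ≤ p.asIdeal → 2 ≤ Order.height p) :
    localHullInFrac R I ≤ domainHull R ∧
      (localHullInFrac R I = domainHull R ↔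
        ∀ q : PrimeSpectrum R, ¬ I ≤ q.asIdeal →
          ∀ n : ℕ, (n : ℕ∞) ≤ min 2 (Order.height q) →
            depthGE (Localization.AtPrime q.asIdeal)
              (IsLocalRing.maximalIdeal (Localization.AtPrime q.asIdeal))
              (Localization.AtPrime q.asIdeal) n) := by
  have part1 : localHullInFrac R I ≤ domainHull R := by
    intro x hx
    rw [mem_localHull] at hx
    obtain ⟨n, hn⟩ := hx
    rw [mem_domainHull]
    intro p hp1 hle
    have h1 : I ^ n ≤ p.asIdeal := le_trans hn hle
    have h2 : I ≤ p.asIdeal := p.2.le_of_pow_le h1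
    have := hht p h2
    rw [hp1] at this
    norm_num at this
  refine ⟨part1, ?_, ?_⟩
  · -- equality implies S2 away from V(I)
    intro heq q hIq n hn
    have hn2 : n ≤ 2 := by
      have := le_trans hn (min_le_left _ _)
      exact_mod_cast this
    set Rq := Localization.AtPrime q.asIdeal with hRq
    haveI : IsDomain Rq :=
      IsLocalization.isDomain_localization q.asIdeal.primeCompl_le_nonZeroDivisors
    interval_cases n
    · exact ⟨[], rfl, by simp, RingTheory.Sequence.IsWeaklyRegular.nil _ _⟩
    · -- n = 1 : any nonzero element of the maximal ideal is regular
      have h1 : (1 : ℕ∞) ≤ Order.height q := le_trans hn (min_le_right _ _)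
      have hq0 : q.asIdeal ≠ ⊥ := by
        intro h
        have hmin : IsMin q := by
          intro p hp
          rw [← PrimeSpectrum.asIdeal_le_asIdeal, h]
          exact bot_le
        rw [Order.height_eq_zero.mpr hmin] at h1
        exact (by norm_num : ¬ (1 : ℕ∞) ≤ 0) h1
      obtain ⟨r, hrq, hr0⟩ := Submodule.exists_mem_ne_zero_of_ne_bot hq0
      have hρm : algebraMap R Rq r ∈ IsLocalRing.maximalIdeal Rq :=
        (IsLocalization.AtPrime.to_map_mem_maximal_iff Rq q.asIdeal r).mpr hrq
      have hρ0 : algebraMap R Rq r ≠ 0 := fun h => hr0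
        (IsLocalization.injective Rq q.asIdeal.primeCompl_le_nonZeroDivisors
          (h.trans (map_zero _).symm))
      refine ⟨[algebraMap R Rq r], rfl, by simpa using hρm, ?_⟩
      rw [RingTheory.Sequence.isWeaklyRegular_singleton_iff]
      exact fun a b h => mul_left_cancel₀ hρ0 (by simpa [smul_eq_mul] using h)
    · -- n = 2 : the real case
      have hq2 : (2 : ℕ∞) ≤ Order.height q := le_trans hn (min_le_right _ _)
      obtain ⟨r, s, hr, hs, hw⟩ := depth_two_of_eq R I hht heq q hIq hq2
      refine ⟨[r, s], rfl, ?_, hw⟩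
      intro z hz
      rcases List.mem_pair.mp hz with rfl | rfl
      · exact hr
      · exact hs
  · -- S2 away from V(I) implies equality
    intro hcond
    refine le_antisymm part1 ?_
    intro x hx
    rw [mem_domainHull] at hx
    rw [mem_localHull]
    refine Ideal.exists_pow_le_of_le_radical_of_fg ?_ (IsNoetherian.noetherian I)
    rw [Ideal.radical_eq_sInf]
    refine le_sInf ?_
    rintro P ⟨hJP, hP⟩
    by_contra hIP
    haveI := hP
    obtain ⟨Q, hQmin, hQle⟩ := Ideal.exists_minimalPrimes_le hJP
    haveI hQprime : Q.IsPrime := hQmin.1.1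
    set q' : PrimeSpectrum R := ⟨Q, hQprime⟩ with hq'
    have hIQ : ¬ I ≤ Q := fun h => hIP (le_trans h hQle)
    have hJQ : colonOf R x ≤ Q := hQmin.1.2
    obtain ⟨b, hb0, hbJ⟩ := exists_ne_zero_mem_colonOf R x
    have hQ0 : Q ≠ ⊥ := by
      intro h
      apply hb0
      have := hJQ hbJ
      rwa [h, Ideal.mem_bot] at this
    have hh0 : Order.height q' ≠ 0 := by
      intro h
      have hmin : IsMin q' := Order.height_eq_zero.mp h
      have hbot : q' ≤ ⟨⊥, Ideal.bot_prime⟩ := hmin (b := ⟨⊥, Ideal.bot_prime⟩) bot_le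
      exact hQ0 (le_bot_iff.mp hbot)
    have hh1 : Order.height q' ≠ 1 := fun h => hx q' h hJQ
    have hq2 : (2 : ℕ∞) ≤ Order.height q' := two_le_enat hh0 hh1
    have hdepth := hcond q' hIQ 2 (le_min (by norm_num) hq2)
    obtain ⟨rs, hlen, hmem, hwr⟩ := hdepth
    obtain ⟨r, s, rfl⟩ := List.length_eq_two.mp hlen
    exact local_step R x q' hQmin
      ⟨r, s, hmem r (by simp), hmem s (by simp), hwr⟩
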